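/- arXiv:0807.0421 — 2 statements merged into one kernel-verified Lean document; each statement's English description precedes it below -/
import Mathlib

section
/- Let N ≥ 1 and let V : 𝕋² → ℝ² be C². Then Σ_{k∈ℤ₂⁺, |k|≤N} [ cos(k·θ)(k̄/|k|^{α+1},∇)(cos(k·θ)(k̄/|k|^{α+1},∇)V) + sin(k·θ)(k̄/|k|^{α+1},∇)(sin(k·θ)(k̄/|k|^{α+1},∇)V) ] + ΔV = (1 + (1/2) Σ_{k∈ℤ₂⁺,|k|≤N} |k|^{-2α}) ΔV, i.e. the second-order operator built from the divergence-free basis fields Ā_k, B̄_k (|k|≤N) together with the constant fields Ā₀, B̄₀ acts on V as a constant multiple of the Laplacian. -/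
open Real

/-- Directional derivative of a vector-valued function on `ℝ²` along `(v₁,v₂)`. -/
noncomputable def dirD (v₁ v₂ : ℝ) (F : ℝ → ℝ → ℝ × ℝ) : ℝ → ℝ → ℝ × ℝ :=
  fun x y => v₁ • deriv (fun t => F t y) x + v₂ • deriv (fun t => F x t) y

/-- Componentwise Laplacian `ΔF = ∂²_{θ₁}F + ∂²_{θ₂}F`. -/
noncomputable def lap2 (F : ℝ → ℝ → ℝ × ℝ) : ℝ → ℝ → ℝ × ℝ :=
  fun x y => deriv (fun t => deriv (fun s => F s y) t) x
    + deriv (fun t => deriv (fun s => F x s) t) y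

/-- The finite index set `{k ∈ ℤ₂⁺ : |k| ≤ N}`. -/
noncomputable def idxSet (N : ℕ) : Finset (ℤ × ℤ) :=
  (Finset.Icc ((-(N : ℤ), -(N : ℤ))) (((N : ℤ), (N : ℤ)))).filter
    (fun k => (0 < k.1 ∨ (k.1 = 0 ∧ 0 < k.2)) ∧ k.1 ^ 2 + k.2 ^ 2 ≤ (N : ℤ) ^ 2)

lemma deriv_fst' {g : ℝ × ℝ → ℝ × ℝ} {a b : ℝ} (hg : DifferentiableAt ℝ g (a, b)) :
    deriv (fun t => g (t, b)) a = fderiv ℝ g (a, b) (1, 0) := by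
  have hc : HasDerivAt (fun t : ℝ => (t, b)) ((1 : ℝ), (0 : ℝ)) a :=
    (hasDerivAt_id a).prodMk (hasDerivAt_const a b)
  have := hg.hasFDerivAt.comp_hasDerivAt a hc
  simpa [Function.comp_def] using this.deriv

lemma deriv_snd' {g : ℝ × ℝ → ℝ × ℝ} {a b : ℝ} (hg : DifferentiableAt ℝ g (a, b)) :
    deriv (fun t => g (a, t)) b = fderiv ℝ g (a, b) (0, 1) := by
  have hc : HasDerivAt (fun t : ℝ => (a, t)) ((0 : ℝ), (1 : ℝ)) b :=
    (hasDerivAt_const b a).prodMk (hasDerivAt_id b)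
  have := hg.hasFDerivAt.comp_hasDerivAt b hc
  simpa [Function.comp_def] using this.deriv

lemma dirD_eq_fderiv {g : ℝ × ℝ → ℝ × ℝ} {x y : ℝ}
    (hg : DifferentiableAt ℝ g (x, y)) (w₁ w₂ : ℝ) :
    dirD w₁ w₂ (fun a b => g (a, b)) x y = fderiv ℝ g (x, y) (w₁, w₂) := by
  have hv : ((w₁, w₂) : ℝ × ℝ) = w₁ • ((1 : ℝ), (0 : ℝ)) + w₂ • ((0 : ℝ), (1 : ℝ)) := by
    simp
  rw [dirD, deriv_fst' hg, deriv_snd' hg, hv, map_add, map_smul, map_smul]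

section main

variable {V : ℝ → ℝ → ℝ × ℝ}

/-- Key per-mode computation: if `(w₁,w₂)` is orthogonal to `(k₁,k₂)`, the
cos/sin second-order terms add up to the pure second directional derivative. -/
lemma summand_eq (hV : ContDiff ℝ 2 (fun p : ℝ × ℝ => V p.1 p.2))
    (x y k₁ k₂ w₁ w₂ : ℝ) (hw : k₁ * w₁ + k₂ * w₂ = 0) :
    Real.cos (k₁ * x + k₂ * y) •
        dirD w₁ w₂ (fun x' y' => Real.cos (k₁ * x' + k₂ * y') • dirD w₁ w₂ V x' y') x y
      + Real.sin (k₁ * x + k₂ * y) •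
        dirD w₁ w₂ (fun x' y' => Real.sin (k₁ * x' + k₂ * y') • dirD w₁ w₂ V x' y') x y
      = fderiv ℝ (fderiv ℝ (fun p : ℝ × ℝ => V p.1 p.2)) (x, y) (w₁, w₂) (w₁, w₂) := by
  set f : ℝ × ℝ → ℝ × ℝ := fun p => V p.1 p.2 with hf
  have hdf : Differentiable ℝ f := hV.differentiable (by norm_num)
  have hf1 : ContDiff ℝ 1 (fderiv ℝ f) := hV.fderiv_right (by norm_num)
  have hdff : Differentiable ℝ (fderiv ℝ f) := hf1.differentiable (by norm_num)
  -- the first directional derivative as a function on ℝ²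
  set g : ℝ × ℝ → ℝ × ℝ := fun p => fderiv ℝ f p (w₁, w₂) with hg
  have hVg : ∀ a b : ℝ, dirD w₁ w₂ V a b = g (a, b) := by
    intro a b
    exact dirD_eq_fderiv (hdf (a, b)) w₁ w₂
  have hgdiff : ∀ p : ℝ × ℝ, HasFDerivAt g
      ((ContinuousLinearMap.apply ℝ (ℝ × ℝ) ((w₁, w₂) : ℝ × ℝ)).comp
        (fderiv ℝ (fderiv ℝ f) p)) p := by
    intro p
    exact (ContinuousLinearMap.apply ℝ (ℝ × ℝ) ((w₁, w₂) : ℝ × ℝ)).hasFDerivAt.comp p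
      (hdff p).hasFDerivAt
  have hgd : ∀ p : ℝ × ℝ, DifferentiableAt ℝ g p := fun p => (hgdiff p).differentiableAt
  have hgval : fderiv ℝ g (x, y) (w₁, w₂)
      = fderiv ℝ (fderiv ℝ f) (x, y) (w₁, w₂) (w₁, w₂) := by
    rw [(hgdiff (x, y)).fderiv]; rfl
  -- the linear form p ↦ k₁ p.1 + k₂ p.2
  have hl : ∀ p : ℝ × ℝ, HasFDerivAt (fun q : ℝ × ℝ => k₁ * q.1 + k₂ * q.2)
      (k₁ • ContinuousLinearMap.fst ℝ ℝ ℝ + k₂ • ContinuousLinearMap.snd ℝ ℝ ℝ) p := by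
    intro p
    exact ((hasFDerivAt_fst.const_mul k₁).add (hasFDerivAt_snd.const_mul k₂))
  have happ : (k₁ • ContinuousLinearMap.fst ℝ ℝ ℝ + k₂ • ContinuousLinearMap.snd ℝ ℝ ℝ)
      ((w₁, w₂) : ℝ × ℝ) = 0 := by
    simpa using hw
  -- cosine part
  have hcos : dirD w₁ w₂ (fun x' y' => Real.cos (k₁ * x' + k₂ * y') • dirD w₁ w₂ V x' y') x y
      = Real.cos (k₁ * x + k₂ * y) • fderiv ℝ g (x, y) (w₁, w₂) := by
    have hfun : (fun x' y' => Real.cos (k₁ * x' + k₂ * y') • dirD w₁ w₂ V x' y')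
        = fun a b => (fun p : ℝ × ℝ => Real.cos (k₁ * p.1 + k₂ * p.2) • g p) (a, b) := by
      funext a b; simp only [hVg a b]
    have hφ : DifferentiableAt ℝ (fun p : ℝ × ℝ => Real.cos (k₁ * p.1 + k₂ * p.2)) (x, y) :=
      ((hl (x, y)).cos).differentiableAt
    have h0 : (fderiv ℝ (fun p : ℝ × ℝ => Real.cos (k₁ * p.1 + k₂ * p.2)) (x, y))
        ((w₁, w₂) : ℝ × ℝ) = 0 := by
      rw [((hl (x, y)).cos).fderiv]
      simp only [ContinuousLinearMap.coe_smul', Pi.smul_apply, ContinuousLinearMap.add_apply,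
        ContinuousLinearMap.coe_fst', ContinuousLinearMap.coe_snd', smul_eq_mul]
      linear_combination (-Real.sin (k₁ * x + k₂ * y)) * hw
    rw [hfun, dirD_eq_fderiv
      (g := fun p : ℝ × ℝ => Real.cos (k₁ * p.1 + k₂ * p.2) • g p) (hφ.smul (hgd (x, y))) w₁ w₂,
      fderiv_fun_smul hφ (hgd (x, y))]
    simp only [ContinuousLinearMap.add_apply, ContinuousLinearMap.coe_smul', Pi.smul_apply,
      ContinuousLinearMap.smulRight_apply, h0, zero_smul, add_zero]
  have hsin : dirD w₁ w₂ (fun x' y' => Real.sin (k₁ * x' + k₂ * y') • dirD w₁ w₂ V x' y') x y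
      = Real.sin (k₁ * x + k₂ * y) • fderiv ℝ g (x, y) (w₁, w₂) := by
    have hfun : (fun x' y' => Real.sin (k₁ * x' + k₂ * y') • dirD w₁ w₂ V x' y')
        = fun a b => (fun p : ℝ × ℝ => Real.sin (k₁ * p.1 + k₂ * p.2) • g p) (a, b) := by
      funext a b; simp only [hVg a b]
    have hφ : DifferentiableAt ℝ (fun p : ℝ × ℝ => Real.sin (k₁ * p.1 + k₂ * p.2)) (x, y) :=
      ((hl (x, y)).sin).differentiableAt
    have h0 : (fderiv ℝ (fun p : ℝ × ℝ => Real.sin (k₁ * p.1 + k₂ * p.2)) (x, y))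
        ((w₁, w₂) : ℝ × ℝ) = 0 := by
      rw [((hl (x, y)).sin).fderiv]
      simp only [ContinuousLinearMap.coe_smul', Pi.smul_apply, ContinuousLinearMap.add_apply,
        ContinuousLinearMap.coe_fst', ContinuousLinearMap.coe_snd', smul_eq_mul]
      linear_combination (Real.cos (k₁ * x + k₂ * y)) * hw
    rw [hfun, dirD_eq_fderiv
      (g := fun p : ℝ × ℝ => Real.sin (k₁ * p.1 + k₂ * p.2) • g p) (hφ.smul (hgd (x, y))) w₁ w₂,
      fderiv_fun_smul hφ (hgd (x, y))]
    simp only [ContinuousLinearMap.add_apply, ContinuousLinearMap.coe_smul', Pi.smul_apply,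
      ContinuousLinearMap.smulRight_apply, h0, zero_smul, add_zero]
  rw [hcos, hsin, smul_smul, smul_smul, ← add_smul, ← hgval]
  rw [show Real.cos (k₁ * x + k₂ * y) * Real.cos (k₁ * x + k₂ * y)
      + Real.sin (k₁ * x + k₂ * y) * Real.sin (k₁ * x + k₂ * y) = 1 by
    have := Real.sin_sq_add_cos_sq (k₁ * x + k₂ * y); nlinarith [this]]
  rw [one_smul]

end main

set_option maxHeartbeats 1000000 in
/-- The second-order operator built from the divergence-free basis fields `Ā_k, B̄_k`
(`|k| ≤ N`) together with the constant fields `Ā₀, B̄₀` acts on a `C²` vector field `V`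
as `(1 + (1/2)Σ_{k∈ℤ₂⁺,|k|≤N}|k|^{-2α}) Δ`. -/
theorem stmt7 (α : ℝ) (hα : 2 < α) (N : ℕ) (hN : 1 ≤ N) (V : ℝ → ℝ → ℝ × ℝ)
    (hV : ContDiff ℝ 2 (fun p : ℝ × ℝ => V p.1 p.2)) (x y : ℝ) :
    (∑ k ∈ idxSet N,
        (Real.cos ((k.1 : ℝ) * x + (k.2 : ℝ) * y) •
            dirD ((Real.sqrt ((k.1 : ℝ) ^ 2 + (k.2 : ℝ) ^ 2)) ^ (-(α + 1)) * (k.2 : ℝ))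
              (-((Real.sqrt ((k.1 : ℝ) ^ 2 + (k.2 : ℝ) ^ 2)) ^ (-(α + 1)) * (k.1 : ℝ)))
              (fun x' y' => Real.cos ((k.1 : ℝ) * x' + (k.2 : ℝ) * y') •
                dirD ((Real.sqrt ((k.1 : ℝ) ^ 2 + (k.2 : ℝ) ^ 2)) ^ (-(α + 1)) * (k.2 : ℝ))
                  (-((Real.sqrt ((k.1 : ℝ) ^ 2 + (k.2 : ℝ) ^ 2)) ^ (-(α + 1)) * (k.1 : ℝ)))
                  V x' y') x y
          + Real.sin ((k.1 : ℝ) * x + (k.2 : ℝ) * y) •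
            dirD ((Real.sqrt ((k.1 : ℝ) ^ 2 + (k.2 : ℝ) ^ 2)) ^ (-(α + 1)) * (k.2 : ℝ))
              (-((Real.sqrt ((k.1 : ℝ) ^ 2 + (k.2 : ℝ) ^ 2)) ^ (-(α + 1)) * (k.1 : ℝ)))
              (fun x' y' => Real.sin ((k.1 : ℝ) * x' + (k.2 : ℝ) * y') •
                dirD ((Real.sqrt ((k.1 : ℝ) ^ 2 + (k.2 : ℝ) ^ 2)) ^ (-(α + 1)) * (k.2 : ℝ))
                  (-((Real.sqrt ((k.1 : ℝ) ^ 2 + (k.2 : ℝ) ^ 2)) ^ (-(α + 1)) * (k.1 : ℝ)))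
                  V x' y') x y))
      + lap2 V x y
      = (1 + (1 / 2) * ∑ k ∈ idxSet N,
          ((k.1 : ℝ) ^ 2 + (k.2 : ℝ) ^ 2) ^ (-α)) • lap2 V x y := by
  classical
  -- Step 1: rewrite each summand using `summand_eq`.
  have hsum1 := Finset.sum_congr (rfl : idxSet N = idxSet N)
      (fun k (hk : k ∈ idxSet N) => summand_eq (V := V) hV x y ((k.1 : ℝ)) ((k.2 : ℝ))
        ((Real.sqrt ((k.1 : ℝ) ^ 2 + (k.2 : ℝ) ^ 2)) ^ (-(α + 1)) * (k.2 : ℝ))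
        (-((Real.sqrt ((k.1 : ℝ) ^ 2 + (k.2 : ℝ) ^ 2)) ^ (-(α + 1)) * (k.1 : ℝ))) (by ring))
  rw [hsum1]; clear hsum1
  set f : ℝ × ℝ → ℝ × ℝ := fun p => V p.1 p.2 with hf
  have hdf : Differentiable ℝ f := hV.differentiable (by norm_num)
  have hf1 : ContDiff ℝ 1 (fderiv ℝ f) := hV.fderiv_right (by norm_num)
  have hdff : Differentiable ℝ (fderiv ℝ f) := hf1.differentiable (by norm_num)
  set B := fderiv ℝ (fderiv ℝ f) (x, y) with hB
  have hgdiff : ∀ (v : ℝ × ℝ) (p : ℝ × ℝ), HasFDerivAt (fun q => fderiv ℝ f q v)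
      ((ContinuousLinearMap.apply ℝ (ℝ × ℝ) v).comp (fderiv ℝ (fderiv ℝ f) p)) p :=
    fun v p => (ContinuousLinearMap.apply ℝ (ℝ × ℝ) v).hasFDerivAt.comp p (hdff p).hasFDerivAt
  have hsymm : ∀ u v : ℝ × ℝ, B u v = B v u := fun u v =>
    second_derivative_symmetric (fun q => (hdf q).hasFDerivAt) (hdff (x, y)).hasFDerivAt u v
  -- Laplacian in terms of B
  have hlap : lap2 V x y = B (1, 0) (1, 0) + B (0, 1) (0, 1) := by
    have e1 : (fun t => deriv (fun s => V s y) t) = fun t => fderiv ℝ f (t, y) (1, 0) := by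
      funext t; exact deriv_fst' (hdf (t, y))
    have e2 : (fun t => deriv (fun s => V x s) t) = fun t => fderiv ℝ f (x, t) (0, 1) := by
      funext t; exact deriv_snd' (hdf (x, t))
    rw [lap2, e1, e2, deriv_fst' (hgdiff ((1 : ℝ), (0 : ℝ)) (x, y)).differentiableAt,
      deriv_snd' (hgdiff ((0 : ℝ), (1 : ℝ)) (x, y)).differentiableAt,
      (hgdiff ((1 : ℝ), (0 : ℝ)) (x, y)).fderiv, (hgdiff ((0 : ℝ), (1 : ℝ)) (x, y)).fderiv]
    rfl
  -- quadratic form expansion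
  have hquad : ∀ a b : ℝ, B (a, b) (a, b)
      = (a ^ 2) • B (1, 0) (1, 0) + (2 * (a * b)) • B (1, 0) (0, 1)
        + (b ^ 2) • B (0, 1) (0, 1) := by
    intro a b
    have hv : ((a, b) : ℝ × ℝ) = a • ((1 : ℝ), (0 : ℝ)) + b • ((0 : ℝ), (1 : ℝ)) := by simp
    rw [hv, map_add, map_smul, map_smul]
    simp only [ContinuousLinearMap.add_apply, ContinuousLinearMap.coe_smul', Pi.smul_apply,
      map_add, map_smul]
    rw [hsymm ((0 : ℝ), (1 : ℝ)) ((1 : ℝ), (0 : ℝ))]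
    module
  have hpair : ∀ a b : ℝ, B (b, -a) (b, -a) + B (a, b) (a, b)
      = (a ^ 2 + b ^ 2) • (B (1, 0) (1, 0) + B (0, 1) (0, 1)) := by
    intro a b; rw [hquad b (-a), hquad a b]; module
  -- the coefficient and the summand as functions of k
  set c : ℤ × ℤ → ℝ :=
    fun k => (Real.sqrt ((k.1 : ℝ) ^ 2 + (k.2 : ℝ) ^ 2)) ^ (-(α + 1)) with hc
  set G : ℤ × ℤ → ℝ × ℝ := fun k =>
    B (c k * (k.2 : ℝ), -(c k * (k.1 : ℝ))) (c k * (k.2 : ℝ), -(c k * (k.1 : ℝ))) with hG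
  -- the pairing involution
  set σ : ℤ × ℤ → ℤ × ℤ := fun k => if 0 < k.2 then (k.2, -k.1) else (-k.2, k.1) with hσ
  have hmem : ∀ k ∈ idxSet N, σ k ∈ idxSet N := by
    intro k hk
    obtain ⟨k1, k2⟩ := k
    simp only [idxSet, Finset.mem_filter, Finset.mem_Icc, Prod.le_def, hσ] at hk ⊢
    obtain ⟨⟨⟨h1, h2⟩, h3, h4⟩, hpos, hsq⟩ := hk
    split_ifs with h <;>
      refine ⟨⟨⟨?_, ?_⟩, ?_, ?_⟩, ?_, ?_⟩ <;> first | omega | (dsimp only; nlinarith [hsq])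
  have hinv : ∀ k ∈ idxSet N, σ (σ k) = k := by
    intro k hk
    simp only [idxSet, Finset.mem_filter] at hk
    obtain ⟨-, hpos, -⟩ := hk
    obtain ⟨k1, k2⟩ := k
    dsimp only at hpos
    simp only [hσ]
    by_cases h : 0 < k2
    · simp only [if_pos h]
      split_ifs with h2 <;> simp only [Prod.mk.injEq, neg_neg, and_true, true_and,
        eq_self_iff_true] <;> first | trivial | omega
    · simp only [if_neg h]
      split_ifs with h2 <;> simp only [Prod.mk.injEq, neg_neg, and_true, true_and,
        eq_self_iff_true] <;> first | trivial | omega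
  have hre : ∑ k ∈ idxSet N, G k = ∑ k ∈ idxSet N, G (σ k) :=
    Finset.sum_nbij' σ σ hmem hmem hinv hinv (fun k hk => by rw [hinv k hk])
  -- key pairing identity
  have hkey : ∀ k ∈ idxSet N, G k + G (σ k)
      = (((k.1 : ℝ) ^ 2 + (k.2 : ℝ) ^ 2) ^ (-α)) • (B (1, 0) (1, 0) + B (0, 1) (0, 1)) := by
    intro k hk
    have hkpos : (0 : ℝ) < (k.1 : ℝ) ^ 2 + (k.2 : ℝ) ^ 2 := by
      simp only [idxSet, Finset.mem_filter] at hk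
      obtain ⟨-, hpos, -⟩ := hk
      have h0 : (0 : ℤ) < k.1 ^ 2 + k.2 ^ 2 := by
        rcases hpos with h | ⟨h1, h2⟩ <;> nlinarith
      exact_mod_cast h0
    have hc1 : c k = ((k.1 : ℝ) ^ 2 + (k.2 : ℝ) ^ 2) ^ (-(α + 1) / 2) := by
      simp only [hc]
      rw [Real.sqrt_eq_rpow, ← Real.rpow_mul hkpos.le]
      congr 1; ring
    have hc2 : (c k * (k.1 : ℝ)) ^ 2 + (c k * (k.2 : ℝ)) ^ 2
        = ((k.1 : ℝ) ^ 2 + (k.2 : ℝ) ^ 2) ^ (-α) := by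
      have haux : ((k.1 : ℝ) ^ 2 + (k.2 : ℝ) ^ 2) ^ (-(α + 1) / 2)
            * ((k.1 : ℝ) ^ 2 + (k.2 : ℝ) ^ 2) ^ (-(α + 1) / 2)
            * ((k.1 : ℝ) ^ 2 + (k.2 : ℝ) ^ 2)
          = ((k.1 : ℝ) ^ 2 + (k.2 : ℝ) ^ 2) ^ (-α) := by
        rw [← Real.rpow_add hkpos, ← Real.rpow_add_one hkpos.ne']
        congr 1; ring
      rw [hc1]; linear_combination haux
    have hcσ : c (σ k) = c k := by
      simp only [hσ, hc]
      split_ifs <;> · dsimp only; push_cast; ring_nf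
    have hBneg : ∀ v : ℝ × ℝ, B (-v) (-v) = B v v := by
      intro v
      simp only [map_neg, ContinuousLinearMap.neg_apply, neg_neg]
    have hGσ : G (σ k)
        = B (c k * (k.1 : ℝ), c k * (k.2 : ℝ)) (c k * (k.1 : ℝ), c k * (k.2 : ℝ)) := by
      by_cases h : 0 < k.2
      · have hσk : σ k = (k.2, -k.1) := by simp [hσ, h]
        have hv : ((c (σ k) * ((σ k).2 : ℝ), -(c (σ k) * ((σ k).1 : ℝ))) : ℝ × ℝ)
            = -((c k * (k.1 : ℝ), c k * (k.2 : ℝ)) : ℝ × ℝ) := by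
          rw [hcσ, hσk]; dsimp only; push_cast
          simp only [Prod.neg_mk, Prod.mk.injEq]
          constructor <;> first | trivial | ring
        simp only [hG]
        rw [hv]
        exact hBneg _
      · have hσk : σ k = (-k.2, k.1) := by simp [hσ, h]
        have hv : ((c (σ k) * ((σ k).2 : ℝ), -(c (σ k) * ((σ k).1 : ℝ))) : ℝ × ℝ)
            = ((c k * (k.1 : ℝ), c k * (k.2 : ℝ)) : ℝ × ℝ) := by
          rw [hcσ, hσk]; dsimp only; push_cast
          simp only [Prod.mk.injEq]
          constructor <;> first | trivial | ring
        simp only [hG]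
        rw [hv]
    have hGk : G k = B (c k * (k.2 : ℝ), -(c k * (k.1 : ℝ)))
        (c k * (k.2 : ℝ), -(c k * (k.1 : ℝ))) := by simp only [hG]
    rw [hGk, hGσ, hpair (c k * (k.1 : ℝ)) (c k * (k.2 : ℝ)), hc2]
  -- final assembly
  have hL : ∑ k ∈ idxSet N,
        fderiv ℝ (fderiv ℝ (fun p : ℝ × ℝ => V p.1 p.2)) (x, y)
          ((Real.sqrt ((k.1 : ℝ) ^ 2 + (k.2 : ℝ) ^ 2)) ^ (-(α + 1)) * (k.2 : ℝ),
           -((Real.sqrt ((k.1 : ℝ) ^ 2 + (k.2 : ℝ) ^ 2)) ^ (-(α + 1)) * (k.1 : ℝ)))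
          ((Real.sqrt ((k.1 : ℝ) ^ 2 + (k.2 : ℝ) ^ 2)) ^ (-(α + 1)) * (k.2 : ℝ),
           -((Real.sqrt ((k.1 : ℝ) ^ 2 + (k.2 : ℝ) ^ 2)) ^ (-(α + 1)) * (k.1 : ℝ)))
      = ∑ k ∈ idxSet N, G k := Finset.sum_congr rfl fun k _ => rfl
  rw [hL, hlap]
  have h2 : (∑ k ∈ idxSet N, G k) + (∑ k ∈ idxSet N, G k)
      = (∑ k ∈ idxSet N, ((k.1 : ℝ) ^ 2 + (k.2 : ℝ) ^ 2) ^ (-α))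
        • (B (1, 0) (1, 0) + B (0, 1) (0, 1)) := by
    nth_rewrite 2 [hre]
    rw [← Finset.sum_add_distrib, Finset.sum_congr rfl hkey, ← Finset.sum_smul]
  have h3 : (∑ k ∈ idxSet N, G k)
      = ((1 / 2) * ∑ k ∈ idxSet N, ((k.1 : ℝ) ^ 2 + (k.2 : ℝ) ^ 2) ^ (-α))
        • (B (1, 0) (1, 0) + B (0, 1) (0, 1)) := by
    have h4 : (2 : ℝ) • (∑ k ∈ idxSet N, G k)
        = (∑ k ∈ idxSet N, ((k.1 : ℝ) ^ 2 + (k.2 : ℝ) ^ 2) ^ (-α))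
          • (B (1, 0) (1, 0) + B (0, 1) (0, 1)) := by
      rw [two_smul]; exact h2
    calc (∑ k ∈ idxSet N, G k) = (1 / 2 : ℝ) • ((2 : ℝ) • ∑ k ∈ idxSet N, G k) := by
          rw [smul_smul]; norm_num
      _ = ((1 / 2) * ∑ k ∈ idxSet N, ((k.1 : ℝ) ^ 2 + (k.2 : ℝ) ^ 2) ^ (-α))
          • (B (1, 0) (1, 0) + B (0, 1) (0, 1)) := by rw [h4, smul_smul]
  rw [h3, add_smul, one_smul]
  exact add_comm _ _
end

section
/- n-dimensional Laplacian lemma: let V : 𝕋ⁿ → ℝⁿ be C², N ≥ 1, and for each k ∈ ℤₙ⁺ with |k|≤N fix an orthogonal system k̄¹,…,k̄^{n-1} ⊥ k of vectors of length |k|. Then Σ_{k∈ℤₙ⁺,|k|≤N} Σ_{i=1}^{n-1} |k|^{-(2α+2)} [cos(k·θ)(k̄ⁱ,∇)(cos(k·θ)(k̄ⁱ,∇)V) + sin(k·θ)(k̄ⁱ,∇)(sin(k·θ)(k̄ⁱ,∇)V)] + ΔV = (1 + ((n-1)/n) Σ_{k∈ℤₙ⁺,|k|≤N} |k|^{-2α})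 ΔV. -/
open scoped Classical

/-- Directional derivative of a vector field `V : ℝⁿ → ℝⁿ` along `w`. -/
noncomputable def dV {n : ℕ} (w : EuclideanSpace ℝ (Fin n))
    (V : EuclideanSpace ℝ (Fin n) → EuclideanSpace ℝ (Fin n)) :
    EuclideanSpace ℝ (Fin n) → EuclideanSpace ℝ (Fin n) :=
  fun θ => fderiv ℝ V θ w

/-- Componentwise Laplacian `ΔV = Σⱼ ∂²_{θⱼ} V`. -/
noncomputable def lapE {n : ℕ}
    (V : EuclideanSpace ℝ (Fin n) → EuclideanSpace ℝ (Fin n)) :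
    EuclideanSpace ℝ (Fin n) → EuclideanSpace ℝ (Fin n) :=
  fun θ => ∑ j : Fin n,
    fderiv ℝ (fun θ' => fderiv ℝ V θ' (EuclideanSpace.single j 1)) θ
      (EuclideanSpace.single j 1)

/-- The set `{k ∈ ℤₙ⁺ : |k| ≤ N}`, where `ℤₙ⁺` consists of those `k` whose first
nonzero coordinate is positive. -/
noncomputable def idxSetN (n N : ℕ) : Finset (Fin n → ℤ) :=
  (Finset.Icc (fun _ : Fin n => -(N : ℤ)) (fun _ : Fin n => (N : ℤ))).filter
    (fun k => (∃ i, 0 < k i ∧ ∀ j < i, k j = 0) ∧ ∑ j, k j ^ 2 ≤ (N : ℤ) ^ 2)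

open Matrix

section Aux
variable {n : ℕ}
local notation "E" => EuclideanSpace ℝ (Fin n)

lemma inner_coord (x y : E) : (inner ℝ x y : ℝ) = ∑ j, x j * y j := by
  simp [PiLp.inner_apply, RCLike.inner_apply, conj_trivial]
  exact Finset.sum_congr rfl fun j _ => mul_comm _ _

lemma euclid_decomp (x : E) : x = ∑ j, x j • EuclideanSpace.single j (1:ℝ) := by
  ext l
  have h1 : (∑ j, x j • EuclideanSpace.single j (1:ℝ)) l
      = EuclideanSpace.proj (𝕜 := ℝ) l (∑ j, x j • EuclideanSpace.single j (1:ℝ)) := rfl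
  rw [h1, map_sum]
  simp [EuclideanSpace.single_apply, PiLp.smul_apply, EuclideanSpace.proj]

lemma bilin_expand (b : E →L[ℝ] E →L[ℝ] E) (x y : E) :
    b x y = ∑ j, ∑ l, (x j * y l) • b (EuclideanSpace.single j 1) (EuclideanSpace.single l 1) := by
  have key : ∀ l, (b (∑ j, x j • EuclideanSpace.single j (1:ℝ))) (y l • EuclideanSpace.single l 1)
      = ∑ j, (x j * y l) • b (EuclideanSpace.single j 1) (EuclideanSpace.single l 1) := by
    intro l
    rw [_root_.map_smul, map_sum, ContinuousLinearMap.sum_apply, Finset.smul_sum]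
    refine Finset.sum_congr rfl fun j _ => ?_
    rw [_root_.map_smul, ContinuousLinearMap.smul_apply, smul_smul, mul_comm]
  conv_lhs => rw [euclid_decomp x, euclid_decomp y]
  rw [map_sum]
  simp_rw [key]
  exact Finset.sum_comm

lemma ortho_coords {ι : Type} [Fintype ι] [DecidableEq ι] (hcard : Fintype.card ι = n) (v : ι → E)
    (r : ℝ) (hr : r ≠ 0)
    (hin : ∀ a a', (∑ j, v a j * v a' j) = if a = a' then r ^ 2 else 0) :
    ∀ j l : Fin n, (∑ a, v a j * v a l) = if j = l then r ^ 2 else 0 := by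
  set e := Fintype.equivFinOfCardEq hcard with he
  set M : Matrix (Fin n) (Fin n) ℝ := fun a j => r⁻¹ * v (e.symm a) j with hM
  have h1 : M * Mᵀ = 1 := by
    ext a b
    simp only [Matrix.mul_apply, Matrix.transpose_apply, Matrix.one_apply]
    simp only [hM]
    have : ∑ j, r⁻¹ * v (e.symm a) j * (r⁻¹ * v (e.symm b) j)
        = r⁻¹ * r⁻¹ * ∑ j, v (e.symm a) j * v (e.symm b) j := by
      rw [Finset.mul_sum]; exact Finset.sum_congr rfl fun j _ => by ring
    rw [this, hin]
    rcases eq_or_ne a b with h | h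
    · simp only [h, if_pos rfl, ↓reduceIte]
      field_simp
    · have : e.symm a ≠ e.symm b := fun hc => h (e.symm.injective hc)
      simp [h, this]
  have h2 : Mᵀ * M = 1 := mul_eq_one_comm.mp h1
  intro j l
  have h3 : (Mᵀ * M) j l = (if j = l then (1:ℝ) else 0) := by rw [h2, Matrix.one_apply]
  have h4 : ∑ a, v a j * v a l = ∑ a : Fin n, v (e.symm a) j * v (e.symm a) l :=
    Fintype.sum_equiv e _ _ (fun a => by rw [Equiv.symm_apply_apply])
  have h5 : (Mᵀ * M) j l = r⁻¹ * r⁻¹ * ∑ a : Fin n, v (e.symm a) j * v (e.symm a) l := by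
    simp only [Matrix.mul_apply, Matrix.transpose_apply, Finset.mul_sum]
    simp only [hM]
    exact Finset.sum_congr rfl fun a _ => by ring
  rw [h4]
  have h6 : ∑ a : Fin n, v (e.symm a) j * v (e.symm a) l
      = r * r * ((Mᵀ * M) j l) := by
    rw [h5]; field_simp
  rw [h6, h3]
  rcases eq_or_ne j l with h | h <;> simp [h] <;> ring

lemma hasFDerivAt_linsum (κ θ : E) : HasFDerivAt (fun θ' : E => ∑ j, κ j * θ' j)
    (innerSL ℝ κ) θ := by
  have : (fun θ' : E => ∑ j, κ j * θ' j) = fun θ' => (innerSL ℝ κ) θ' := by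
    funext θ'
    simp [PiLp.inner_apply, RCLike.inner_apply, conj_trivial]
    exact Finset.sum_congr rfl fun j _ => mul_comm _ _
  rw [this]
  exact (innerSL ℝ κ).hasFDerivAt

lemma fderiv_dVaux {V : E → E} (hV : ContDiff ℝ 2 V) (w θ : E) :
    fderiv ℝ (fun θ' => fderiv ℝ V θ' w) θ = (fderiv ℝ (fderiv ℝ V) θ).flip w := by
  have hdf : DifferentiableAt ℝ (fderiv ℝ V) θ :=
    ((hV.fderiv_right (m := 1) (by norm_num)).differentiable (by norm_num)) θ
  rw [fderiv_clm_apply hdf (differentiableAt_const w)]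
  simp

lemma term_eq {V : E → E} (hV : ContDiff ℝ 2 V) (θ w κ : E)
    (hw : ∑ j, κ j * w j = 0) :
    Real.cos (∑ j, κ j * θ j) • dV w (fun θ' => Real.cos (∑ j, κ j * θ' j) • dV w V θ') θ
      + Real.sin (∑ j, κ j * θ j) • dV w (fun θ' => Real.sin (∑ j, κ j * θ' j) • dV w V θ') θ
    = fderiv ℝ (fderiv ℝ V) θ w w := by
  have hdf : Differentiable ℝ (fderiv ℝ V) :=
    (hV.fderiv_right (m := 1) (by norm_num)).differentiable (by norm_num)
  have hg : Differentiable ℝ (fun θ' => fderiv ℝ V θ' w) :=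
    fun x => (hdf x).clm_apply (differentiableAt_const w)
  have hκw : (innerSL ℝ κ) w = 0 := by
    simpa [PiLp.inner_apply, RCLike.inner_apply, conj_trivial, mul_comm] using hw
  have hcos : HasFDerivAt (fun θ' : E => Real.cos (∑ j, κ j * θ' j))
      ((-Real.sin (∑ j, κ j * θ j)) • innerSL ℝ κ) θ :=
    (Real.hasDerivAt_cos _).comp_hasFDerivAt θ (hasFDerivAt_linsum κ θ)
  have hsin : HasFDerivAt (fun θ' : E => Real.sin (∑ j, κ j * θ' j))
      ((Real.cos (∑ j, κ j * θ j)) • innerSL ℝ κ) θ :=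
    (Real.hasDerivAt_sin _).comp_hasFDerivAt θ (hasFDerivAt_linsum κ θ)
  have hBw : fderiv ℝ (fun θ' => fderiv ℝ V θ' w) θ w
      = fderiv ℝ (fderiv ℝ V) θ w w := by
    rw [fderiv_dVaux hV w θ]; rfl
  have hc : (fun θ' => Real.cos (∑ j, κ j * θ' j) • dV w V θ')
      = fun θ' => Real.cos (∑ j, κ j * θ' j) • (fun θ'' => fderiv ℝ V θ'' w) θ' := rfl
  simp only [dV]
  rw [fderiv_fun_smul hcos.differentiableAt (hg θ), fderiv_fun_smul hsin.differentiableAt (hg θ),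
    hcos.fderiv, hsin.fderiv]
  simp only [ContinuousLinearMap.add_apply, ContinuousLinearMap.coe_smul', Pi.smul_apply,
    ContinuousLinearMap.smulRight_apply, hκw, smul_zero, zero_smul, smul_eq_mul, mul_zero,
    add_zero, hBw]
  rw [smul_smul, smul_smul, ← add_smul]
  rw [show Real.cos (∑ j, κ j * θ j) * Real.cos (∑ j, κ j * θ j)
      + Real.sin (∑ j, κ j * θ j) * Real.sin (∑ j, κ j * θ j) = 1 by
    have := Real.sin_sq_add_cos_sq (∑ j, κ j * θ j); nlinarith]
  rw [one_smul]

def condP {n : ℕ} (k : Fin n → ℤ) : Prop := ∃ i, 0 < k i ∧ ∀ j < i, k j = 0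

lemma condP_ne_zero {k : Fin n → ℤ} (h : condP k) : k ≠ 0 := by
  obtain ⟨i, hi, -⟩ := h
  intro h0
  rw [h0] at hi
  exact lt_irrefl 0 hi

lemma condP_or {k : Fin n → ℤ} (h : k ≠ 0) : condP k ∨ condP (-k) := by
  have hne : (Finset.univ.filter (fun i => k i ≠ 0)).Nonempty := by
    rcases Function.ne_iff.mp h with ⟨i, hi⟩
    exact ⟨i, by simpa using hi⟩
  set i₀ := (Finset.univ.filter (fun i => k i ≠ 0)).min' hne with hi₀
  have hk0 : k i₀ ≠ 0 := by
    have := (Finset.univ.filter (fun i => k i ≠ 0)).min'_mem hne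
    simpa using this
  have hz : ∀ j < i₀, k j = 0 := by
    intro j hj
    by_contra hc
    have : i₀ ≤ j := Finset.min'_le _ _ (by simp [hc])
    exact absurd hj (not_lt.mpr this)
  rcases lt_or_gt_of_ne hk0 with h' | h'
  · right; exact ⟨i₀, by simpa using h', fun j hj => by simp [hz j hj]⟩
  · left; exact ⟨i₀, h', hz⟩

lemma condP_not_both {k : Fin n → ℤ} (h : condP k) : ¬ condP (-k) := by
  rintro ⟨i', hi', hz'⟩
  obtain ⟨i, hi, hz⟩ := h
  rcases lt_trichotomy i i' with hlt | heq | hgt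
  · have := hz' i hlt
    simp only [Pi.neg_apply, neg_eq_zero] at this
    omega
  · subst heq
    simp only [Pi.neg_apply] at hi'
    omega
  · have := hz i' hgt
    simp only [Pi.neg_apply] at hi'
    omega

noncomputable def posFix {n : ℕ} (k : Fin n → ℤ) : Fin n → ℤ :=
  if condP k then k else -k

lemma mem_idxSetN {N : ℕ} {k : Fin n → ℤ} :
    k ∈ idxSetN n N ↔ condP k ∧ ∑ j, k j ^ 2 ≤ (N : ℤ) ^ 2 := by
  constructor
  · intro h
    exact (Finset.mem_filter.mp h).2
  · rintro ⟨h1, h2⟩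
    refine Finset.mem_filter.mpr ⟨Finset.mem_Icc.mpr ⟨?_, ?_⟩, h1, h2⟩ <;>
    · intro j
      have hj : k j ^ 2 ≤ (N:ℤ) ^ 2 := le_trans (Finset.single_le_sum
        (f := fun j => k j ^ 2) (fun i _ => sq_nonneg _) (Finset.mem_univ j)) h2
      simp only [Pi.natCast_def]  -- maybe not needed
      nlinarith [sq_nonneg (k j + N), sq_nonneg (k j - N)]

lemma posFix_mem {N : ℕ} {k : Fin n → ℤ} (h0 : k ≠ 0)
    (hs : ∑ j, k j ^ 2 ≤ (N : ℤ) ^ 2) : posFix k ∈ idxSetN n N := by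
  rw [mem_idxSetN]
  unfold posFix
  rcases condP_or h0 with h | h
  · rw [if_pos h]; exact ⟨h, hs⟩
  · have hnc : ¬ condP k := fun hc => condP_not_both hc ((neg_neg k) ▸ h)
    rw [if_neg hnc]
    refine ⟨h, ?_⟩
    simpa using hs

lemma posFix_sq (k : Fin n → ℤ) : ∑ j, posFix k j ^ 2 = ∑ j, k j ^ 2 := by
  unfold posFix
  split <;> simp

lemma posFix_eq_or (k : Fin n → ℤ) : posFix k = k ∨ posFix k = -k := by
  unfold posFix; split
  · exact Or.inl rfl
  · exact Or.inr rfl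

section Invol
variable {N : ℕ} (σ : (Fin n → ℤ) → (Fin n → ℤ))
  (hσneg : ∀ k, σ (-k) = -σ k) (hσσ : ∀ k, σ (σ k) = k)
  (hσsum : ∀ k, ∑ j, σ k j ^ 2 = ∑ j, k j ^ 2)

include hσneg hσσ hσsum

lemma σ_zero : σ 0 = 0 := by
  have := hσneg 0
  rw [neg_zero] at this
  funext i
  have h := congrFun this i
  simp only [Pi.neg_apply, Pi.zero_apply] at h ⊢
  omega

lemma σ_ne_zero {k : Fin n → ℤ} (h : k ≠ 0) : σ k ≠ 0 := by
  intro hc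
  apply h
  have := hσσ k
  rw [hc] at this
  rw [← this, σ_zero σ hσneg hσσ hσsum]

lemma g_mem {k : Fin n → ℤ} (hk : k ∈ idxSetN n N) : posFix (σ k) ∈ idxSetN n N := by
  rw [mem_idxSetN] at hk
  exact posFix_mem (σ_ne_zero σ hσneg hσσ hσsum (condP_ne_zero hk.1))
    (by rw [hσsum]; exact hk.2)

lemma g_invol {k : Fin n → ℤ} (hk : k ∈ idxSetN n N) :
    posFix (σ (posFix (σ k))) = k := by
  rw [mem_idxSetN] at hk
  have hck : condP k := hk.1
  unfold posFix
  split
  · rw [hσσ]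
    rw [if_pos hck]
  · rw [hσneg, hσσ, if_neg, neg_neg]
    intro hc
    exact condP_not_both hck hc

lemma sum_invol (f g : (Fin n → ℤ) → ℝ)
    (hfg : ∀ k ∈ idxSetN n N, f k = g (posFix (σ k))) :
    ∑ k ∈ idxSetN n N, f k = ∑ k ∈ idxSetN n N, g k := by
  refine Finset.sum_nbij' (fun k => posFix (σ k)) (fun k => posFix (σ k))
    (fun k hk => g_mem σ hσneg hσσ hσsum hk) (fun k hk => g_mem σ hσneg hσσ hσsum hk)
    (fun k hk => g_invol σ hσneg hσσ hσsum hk) (fun k hk => g_invol σ hσneg hσσ hσsum hk)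
    (fun k hk => hfg k hk)

end Invol

section Syms
variable {N : ℕ} (hN : 1 ≤ N)

def σswap (a b : Fin n) : (Fin n → ℤ) → (Fin n → ℤ) := fun k => k ∘ (Equiv.swap a b)

def σflip (a : Fin n) : (Fin n → ℤ) → (Fin n → ℤ) :=
  fun k => Function.update k a (-(k a))

lemma σswap_neg (a b : Fin n) : ∀ k, σswap a b (-k) = -σswap a b k := fun k => rfl

lemma σswap_invol (a b : Fin n) : ∀ k, σswap a b (σswap a b k) = k := by
  intro k; funext j; simp [σswap, Equiv.swap_apply_self]

lemma σswap_sum (a b : Fin n) : ∀ k, ∑ j, σswap a b k j ^ 2 = ∑ j, k j ^ 2 := by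
  intro k
  exact Equiv.sum_comp (Equiv.swap a b) (fun j => k j ^ 2)

lemma σflip_neg (a : Fin n) : ∀ k, σflip a (-k) = -σflip a k := by
  intro k; funext j
  rcases eq_or_ne j a with h | h <;> simp [σflip, Function.update_apply, h]

lemma σflip_invol (a : Fin n) : ∀ k, σflip a (σflip a k) = k := by
  intro k
  simp [σflip, Function.update_idem]

lemma σflip_sum (a : Fin n) : ∀ k, ∑ j, σflip a k j ^ 2 = ∑ j, k j ^ 2 := by
  intro k
  refine Finset.sum_congr rfl fun j _ => ?_
  rcases eq_or_ne j a with h | h <;> simp [σflip, Function.update_apply, h]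

end Syms

lemma cast_sq_sum (k : Fin n → ℤ) : (∑ j, ((k j : ℝ))^2) = ((∑ j, k j ^ 2 : ℤ) : ℝ) := by
  push_cast; rfl

lemma sum_offdiag {N : ℕ} (F : ℝ → ℝ) {a b : Fin n} (hab : a ≠ b) :
    ∑ k ∈ idxSetN n N, F (∑ j, ((k j : ℝ))^2) * ((k a : ℝ) * (k b : ℝ)) = 0 := by
  have key := sum_invol (N := N) (σflip a) (σflip_neg a) (σflip_invol a) (σflip_sum a)
    (fun k => F (∑ j, ((k j : ℝ))^2) * ((k a : ℝ) * (k b : ℝ)))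
    (fun k => -(F (∑ j, ((k j : ℝ))^2) * ((k a : ℝ) * (k b : ℝ)))) ?_
  · rw [Finset.sum_neg_distrib] at key
    linarith
  · intro k hk
    set m := σflip a k with hm
    have hS : (∑ j, ((m j : ℝ))^2) = ∑ j, ((k j : ℝ))^2 := by
      rw [cast_sq_sum, cast_sq_sum]
      exact_mod_cast congrArg (fun z : ℤ => (z : ℝ)) (σflip_sum a k)
    have hSp : (∑ j, ((posFix m j : ℝ))^2) = ∑ j, ((m j : ℝ))^2 := by
      rw [cast_sq_sum, cast_sq_sum]
      exact_mod_cast congrArg (fun z : ℤ => (z : ℝ)) (posFix_sq m)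
    have hma : m a = -(k a) := by simp [hm, σflip]
    have hmb : m b = k b := by simp [hm, σflip, Function.update_of_ne hab.symm]
    rcases posFix_eq_or m with h | h <;>
      simp only [h, Pi.neg_apply, hSp, hS, hma, hmb, neg_neg, Int.cast_neg] <;> ring_nf <;>
      simp [hS] <;> ring

lemma sum_diag_eq {N : ℕ} (F : ℝ → ℝ) (a b : Fin n) :
    ∑ k ∈ idxSetN n N, F (∑ j, ((k j : ℝ))^2) * ((k a : ℝ))^2
      = ∑ k ∈ idxSetN n N, F (∑ j, ((k j : ℝ))^2) * ((k b : ℝ))^2 := by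
  refine sum_invol (N := N) (σswap a b) (σswap_neg a b) (σswap_invol a b) (σswap_sum a b)
    _ _ ?_
  intro k hk
  set m := σswap a b k with hm
  have hS : (∑ j, ((m j : ℝ))^2) = ∑ j, ((k j : ℝ))^2 := by
    rw [cast_sq_sum, cast_sq_sum]
    exact_mod_cast congrArg (fun z : ℤ => (z : ℝ)) (σswap_sum a b k)
  have hSp : (∑ j, ((posFix m j : ℝ))^2) = ∑ j, ((m j : ℝ))^2 := by
    rw [cast_sq_sum, cast_sq_sum]
    exact_mod_cast congrArg (fun z : ℤ => (z : ℝ)) (posFix_sq m)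
  have hmb : m b = k a := by simp [hm, σswap, Equiv.swap_apply_right]
  rcases posFix_eq_or m with h | h <;>
    simp only [h, Pi.neg_apply, hSp, hS, hmb, Int.cast_neg] <;> ring_nf <;> simp [hS] <;> ring

lemma sum_diag_val {N : ℕ} (hn : 0 < n) (F : ℝ → ℝ) (a : Fin n) :
    ∑ k ∈ idxSetN n N, F (∑ j, ((k j : ℝ))^2) * ((k a : ℝ))^2
      = (1 / n) * ∑ k ∈ idxSetN n N, F (∑ j, ((k j : ℝ))^2) * (∑ j, ((k j : ℝ))^2) := by
  have h1 : (n : ℝ) * ∑ k ∈ idxSetN n N, F (∑ j, ((k j : ℝ))^2) * ((k a : ℝ))^2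
      = ∑ b : Fin n, ∑ k ∈ idxSetN n N, F (∑ j, ((k j : ℝ))^2) * ((k b : ℝ))^2 := by
    rw [Finset.sum_congr rfl (fun b _ => (sum_diag_eq (N := N) F b a))]
    rw [Finset.sum_const, Finset.card_univ, Fintype.card_fin, nsmul_eq_mul]
  have h2 : ∑ b : Fin n, ∑ k ∈ idxSetN n N, F (∑ j, ((k j : ℝ))^2) * ((k b : ℝ))^2
      = ∑ k ∈ idxSetN n N, F (∑ j, ((k j : ℝ))^2) * (∑ j, ((k j : ℝ))^2) := by
    rw [Finset.sum_comm]
    refine Finset.sum_congr rfl fun k _ => ?_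
    rw [Finset.mul_sum]
  have hn' : (n : ℝ) ≠ 0 := Nat.cast_ne_zero.mpr hn.ne'
  field_simp
  linarith [h1.trans h2]

lemma trace_identity (b : E →L[ℝ] E →L[ℝ] E) {ι : Type} [Fintype ι] [DecidableEq ι]
    (hcard : Fintype.card ι = n) (v : ι → E) (r : ℝ) (hr : r ≠ 0)
    (hin : ∀ a a', (∑ j, v a j * v a' j) = if a = a' then r ^ 2 else 0) :
    ∑ a, b (v a) (v a)
      = r ^ 2 • ∑ j, b (EuclideanSpace.single j 1) (EuclideanSpace.single j 1) := by
  have hoc := ortho_coords hcard v r hr hin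
  calc ∑ a, b (v a) (v a)
      = ∑ a, ∑ j, ∑ l, (v a j * v a l) •
          b (EuclideanSpace.single j 1) (EuclideanSpace.single l 1) :=
        Finset.sum_congr rfl fun a _ => bilin_expand b (v a) (v a)
    _ = ∑ j, ∑ l, (∑ a, v a j * v a l) •
          b (EuclideanSpace.single j 1) (EuclideanSpace.single l 1) := by
        rw [Finset.sum_comm]
        refine Finset.sum_congr rfl fun j _ => ?_
        rw [Finset.sum_comm]
        refine Finset.sum_congr rfl fun l _ => ?_
        rw [← Finset.sum_smul]
    _ = ∑ j, r ^ 2 • b (EuclideanSpace.single j 1) (EuclideanSpace.single j 1) := by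
        refine Finset.sum_congr rfl fun j _ => ?_
        simp_rw [hoc]
        simp
    _ = r ^ 2 • ∑ j, b (EuclideanSpace.single j 1) (EuclideanSpace.single j 1) :=
        (Finset.smul_sum).symm

end Aux

/-- n-dimensional Laplacian lemma: the second-order operator built from the
divergence-free basis fields on `𝕋ⁿ` together with the constant fields acts on a `C²`
vector field `V` as `(1 + ((n-1)/n)Σ_{k∈ℤₙ⁺,|k|≤N}|k|^{-2α}) Δ`. -/
theorem stmt16 (n N : ℕ) (hn : 2 ≤ n) (hN : 1 ≤ N) (α : ℝ) (hα : 0 < α)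
    (kb : (Fin n → ℤ) → Fin (n - 1) → EuclideanSpace ℝ (Fin n))
    (kv : (Fin n → ℤ) → EuclideanSpace ℝ (Fin n))
    (hkv : ∀ k i, kv k i = (k i : ℝ))
    (horth : ∀ k ∈ idxSetN n N, ∀ i j, i ≠ j → (inner ℝ (kb k i) (kb k j) : ℝ) = 0)
    (hperp : ∀ k ∈ idxSetN n N, ∀ i, (inner ℝ (kb k i) (kv k) : ℝ) = 0)
    (hlen : ∀ k ∈ idxSetN n N, ∀ i, ‖kb k i‖ = ‖kv k‖)
    (V : EuclideanSpace ℝ (Fin n) → EuclideanSpace ℝ (Fin n)) (hV : ContDiff ℝ 2 V)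
    (θ : EuclideanSpace ℝ (Fin n)) :
    (∑ k ∈ idxSetN n N, ((∑ j, ((k j : ℝ)) ^ 2) ^ (-(α + 1))) •
        ∑ i : Fin (n - 1),
          (Real.cos (∑ j, (k j : ℝ) * θ j) •
              dV (kb k i) (fun θ' => Real.cos (∑ j, (k j : ℝ) * θ' j) •
                dV (kb k i) V θ') θ
            + Real.sin (∑ j, (k j : ℝ) * θ j) •
              dV (kb k i) (fun θ' => Real.sin (∑ j, (k j : ℝ) * θ' j) •
                dV (kb k i) V θ') θ))
      + lapE V θ
      = (1 + ((n : ℝ) - 1) / (n : ℝ) *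
          ∑ k ∈ idxSetN n N, (∑ j, ((k j : ℝ)) ^ 2) ^ (-α)) • lapE V θ := by
  classical
  have hn0 : 0 < n := lt_of_lt_of_le (by norm_num) hn
  set B := fderiv ℝ (fderiv ℝ V) θ with hB
  set L := ∑ j, B (EuclideanSpace.single j 1) (EuclideanSpace.single j 1) with hL
  have hlap : lapE V θ = L := by
    unfold lapE
    refine Finset.sum_congr rfl fun j _ => ?_
    rw [fderiv_dVaux hV _ θ, ContinuousLinearMap.flip_apply]
  have hSpos : ∀ k ∈ idxSetN n N, (0:ℝ) < ∑ j, ((k j : ℝ)) ^ 2 := by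
    intro k hk
    have hk0 : k ≠ 0 := condP_ne_zero (mem_idxSetN.mp hk).1
    obtain ⟨j0, hj0⟩ := Function.ne_iff.mp hk0
    have hj0' : (k j0 : ℝ) ≠ 0 := by
      have : k j0 ≠ 0 := by simpa using hj0
      exact_mod_cast this
    refine Finset.sum_pos' (fun j _ => sq_nonneg _) ⟨j0, Finset.mem_univ _, by positivity⟩
  have harith : ∀ k ∈ idxSetN n N, (∑ j, ((k j : ℝ)) ^ 2) ^ (-(α + 1)) * (∑ j, ((k j : ℝ)) ^ 2)
      = (∑ j, ((k j : ℝ)) ^ 2) ^ (-α) := by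
    intro k hk
    have hS := hSpos k hk
    calc (∑ j, ((k j : ℝ)) ^ 2) ^ (-(α + 1)) * (∑ j, ((k j : ℝ)) ^ 2)
        = (∑ j, ((k j : ℝ)) ^ 2) ^ (-(α + 1)) * (∑ j, ((k j : ℝ)) ^ 2) ^ (1:ℝ) := by
          rw [Real.rpow_one]
      _ = (∑ j, ((k j : ℝ)) ^ 2) ^ (-(α + 1) + 1) := (Real.rpow_add hS _ _).symm
      _ = (∑ j, ((k j : ℝ)) ^ 2) ^ (-α) := by norm_num
  have hmain : ∀ k ∈ idxSetN n N,
      (∑ i : Fin (n - 1),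
          (Real.cos (∑ j, (k j : ℝ) * θ j) •
              dV (kb k i) (fun θ' => Real.cos (∑ j, (k j : ℝ) * θ' j) •
                dV (kb k i) V θ') θ
            + Real.sin (∑ j, (k j : ℝ) * θ j) •
              dV (kb k i) (fun θ' => Real.sin (∑ j, (k j : ℝ) * θ' j) •
                dV (kb k i) V θ') θ))
        = (∑ j, ((k j : ℝ)) ^ 2) • L - B (kv k) (kv k) := by
    intro k hk
    have hcond : condP k := (mem_idxSetN.mp hk).1
    have hk0 : k ≠ 0 := condP_ne_zero hcond
    obtain ⟨j0, hj0⟩ := Function.ne_iff.mp hk0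
    have hj0' : k j0 ≠ 0 := by simpa using hj0
    have hkv0 : kv k ≠ 0 := by
      intro hc
      have h1 : kv k j0 = 0 := by rw [hc]; rfl
      rw [hkv] at h1
      exact hj0' (by simpa using h1)
    have hr : (0:ℝ) < ‖kv k‖ := norm_pos_iff.mpr hkv0
    have hrS : ‖kv k‖ ^ 2 = ∑ j, ((k j : ℝ)) ^ 2 := by
      rw [← real_inner_self_eq_norm_sq, inner_coord]
      exact Finset.sum_congr rfl fun j _ => by rw [hkv]; ring
    have hterm : ∀ i : Fin (n - 1),
        (Real.cos (∑ j, (k j : ℝ) * θ j) •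
            dV (kb k i) (fun θ' => Real.cos (∑ j, (k j : ℝ) * θ' j) •
              dV (kb k i) V θ') θ
          + Real.sin (∑ j, (k j : ℝ) * θ j) •
            dV (kb k i) (fun θ' => Real.sin (∑ j, (k j : ℝ) * θ' j) •
              dV (kb k i) V θ') θ)
        = B (kb k i) (kb k i) := by
      intro i
      have hw : ∑ j, kv k j * kb k i j = 0 := by
        rw [← inner_coord, real_inner_comm]
        exact hperp k hk i
      have := term_eq hV θ (kb k i) (kv k) hw
      simp only [hkv] at this
      exact this
    rw [Finset.sum_congr rfl fun i _ => hterm i]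
    set v : Option (Fin (n - 1)) → EuclideanSpace ℝ (Fin n) :=
      fun o => Option.elim o (kv k) (fun i => kb k i) with hv
    have hcard : Fintype.card (Option (Fin (n - 1))) = n := by
      simp only [Fintype.card_option, Fintype.card_fin]
      omega
    have hin : ∀ a a', (∑ j, v a j * v a' j) = if a = a' then ‖kv k‖ ^ 2 else 0 := by
      intro a a'
      match a, a' with
      | none, none =>
        simp only [hv, Option.elim]
        rw [← inner_coord, real_inner_self_eq_norm_sq]; simp
      | none, some i =>
        simp only [hv, Option.elim]
        rw [← inner_coord, real_inner_comm, hperp k hk i]; simp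
      | some i, none =>
        simp only [hv, Option.elim]
        rw [← inner_coord, hperp k hk i]; simp
      | some i, some i' =>
        simp only [hv, Option.elim]
        rcases eq_or_ne i i' with h | h
        · subst h
          rw [← inner_coord, real_inner_self_eq_norm_sq, hlen k hk i]; simp
        · rw [← inner_coord, horth k hk i i' h]; simp [h]
    have htr := trace_identity B hcard v ‖kv k‖ hr.ne' hin
    rw [Fintype.sum_option, hrS] at htr
    simp only [hv, Option.elim] at htr
    have h2 : ∑ i, B (kb k i) (kb k i)
        = B (kv k) (kv k) + ∑ i, B (kb k i) (kb k i) - B (kv k) (kv k) := by abel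
    rw [h2, htr]
  rw [Finset.sum_congr rfl fun k hk => congrArg _ (hmain k hk), hlap]
  have hsplit : ∑ k ∈ idxSetN n N, ((∑ j, ((k j : ℝ)) ^ 2) ^ (-(α + 1))) •
      ((∑ j, ((k j : ℝ)) ^ 2) • L - B (kv k) (kv k))
      = (∑ k ∈ idxSetN n N, (∑ j, ((k j : ℝ)) ^ 2) ^ (-α)) • L
        - ∑ k ∈ idxSetN n N, ((∑ j, ((k j : ℝ)) ^ 2) ^ (-(α + 1))) • B (kv k) (kv k) := by
    rw [Finset.sum_smul, ← Finset.sum_sub_distrib]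
    refine Finset.sum_congr rfl fun k hk => ?_
    rw [smul_sub, smul_smul, harith k hk]
  rw [hsplit]
  -- evaluate the quadratic-form sum
  have hQ : ∑ k ∈ idxSetN n N, ((∑ j, ((k j : ℝ)) ^ 2) ^ (-(α + 1))) • B (kv k) (kv k)
      = ((1/(n:ℝ)) * ∑ k ∈ idxSetN n N, (∑ j, ((k j : ℝ)) ^ 2) ^ (-α)) • L := by
    have hexp : ∀ k ∈ idxSetN n N, ((∑ j, ((k j : ℝ)) ^ 2) ^ (-(α + 1))) • B (kv k) (kv k)
        = ∑ j, ∑ l, ((∑ j', ((k j' : ℝ)) ^ 2) ^ (-(α + 1)) * ((k j : ℝ) * (k l : ℝ))) •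
            B (EuclideanSpace.single j 1) (EuclideanSpace.single l 1) := by
      intro k hk
      rw [bilin_expand B (kv k) (kv k), Finset.smul_sum]
      refine Finset.sum_congr rfl fun j _ => ?_
      rw [Finset.smul_sum]
      refine Finset.sum_congr rfl fun l _ => ?_
      rw [smul_smul, hkv, hkv]
    rw [Finset.sum_congr rfl hexp, Finset.sum_comm]
    have hswap : ∀ j : Fin n,
        (∑ k ∈ idxSetN n N, ∑ l, ((∑ j', ((k j' : ℝ)) ^ 2) ^ (-(α + 1)) * ((k j : ℝ) * (k l : ℝ))) •
            B (EuclideanSpace.single j 1) (EuclideanSpace.single l 1))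
        = ∑ l, (∑ k ∈ idxSetN n N, (∑ j', ((k j' : ℝ)) ^ 2) ^ (-(α + 1)) * ((k j : ℝ) * (k l : ℝ))) •
            B (EuclideanSpace.single j 1) (EuclideanSpace.single l 1) := by
      intro j
      rw [Finset.sum_comm]
      exact Finset.sum_congr rfl fun l _ => by rw [Finset.sum_smul]
    rw [Finset.sum_congr rfl fun j _ => hswap j]
    have hco : ∀ j l : Fin n,
        (∑ k ∈ idxSetN n N, (∑ j', ((k j' : ℝ)) ^ 2) ^ (-(α + 1)) * ((k j : ℝ) * (k l : ℝ)))
        = if j = l then (1/(n:ℝ)) * ∑ k ∈ idxSetN n N, (∑ j', ((k j' : ℝ)) ^ 2) ^ (-α) else 0 := by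
      intro j l
      rcases eq_or_ne j l with h | h
      · subst h
        rw [if_pos rfl]
        have h1 : ∀ k : Fin n → ℤ, (∑ j', ((k j' : ℝ)) ^ 2) ^ (-(α + 1)) * ((k j : ℝ) * (k j : ℝ))
            = (∑ j', ((k j' : ℝ)) ^ 2) ^ (-(α + 1)) * ((k j : ℝ)) ^ 2 := fun k => by ring
        rw [Finset.sum_congr rfl fun k _ => h1 k,
          sum_diag_val hn0 (fun s => s ^ (-(α + 1))) j]
        congr 1
        refine Finset.sum_congr rfl fun k hk => harith k hk
      · rw [if_neg h]
        exact sum_offdiag (fun s => s ^ (-(α + 1))) h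
    rw [Finset.sum_congr rfl fun j _ => Finset.sum_congr rfl fun l _ => by rw [hco j l]]
    have hdiag : ∀ j : Fin n,
        (∑ l, (if j = l then (1/(n:ℝ)) * ∑ k ∈ idxSetN n N, (∑ j', ((k j' : ℝ)) ^ 2) ^ (-α) else 0) •
            B (EuclideanSpace.single j 1) (EuclideanSpace.single l 1))
        = ((1/(n:ℝ)) * ∑ k ∈ idxSetN n N, (∑ j', ((k j' : ℝ)) ^ 2) ^ (-α)) •
            B (EuclideanSpace.single j 1) (EuclideanSpace.single j 1) := by
      intro j
      rw [Finset.sum_eq_single j]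
      · rw [if_pos rfl]
      · intro l _ hl
        rw [if_neg (Ne.symm hl), zero_smul]
      · intro h
        exact absurd (Finset.mem_univ j) h
    rw [Finset.sum_congr rfl fun j _ => hdiag j, ← Finset.smul_sum]
  rw [hQ]
  have hn' : (n : ℝ) ≠ 0 := Nat.cast_ne_zero.mpr hn0.ne'
  set T := ∑ k ∈ idxSetN n N, (∑ j, ((k j : ℝ)) ^ 2) ^ (-α) with hT
  have hfin : T • L - ((1/(n:ℝ)) * T) • L + L = (T - (1/(n:ℝ)) * T + 1) • L := by
    rw [add_smul, sub_smul, one_smul]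
  rw [hfin]
  congr 1
  field_simp
  ring
end
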